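/- (Swapping lemma, scalar first-order filter) Let a, u : ℝ → ℝ be differentiable functions, and let v be the solution of v' = −v + u with v(0) = 0, and let w be the solution of w' = −w + a·u with w(0) = 0. Then w(t) = a(t) v(t) − z(t), where z solves z' = −z + a'·v with z(0) = a(0) v(0) = 0. -/

import Mathlib

theorem swapping_lemma (a u v w z : ℝ → ℝ)
    (ha : Differentiable ℝ a) (hu : Differentiable ℝ u)
    (hv : Differentiable ℝ v) (hw : Differentiable ℝ w) (hz : Differentiable ℝ z)
    (hveq : ∀ t, deriv v t = -v t + u t) (hv0 : v 0 = 0)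
    (hweq : ∀ t, deriv w t = -w t + a t * u t) (hw0 : w 0 = 0)
    (hzeq : ∀ t, deriv z t = -z t + deriv a t * v t) (hz0 : z 0 = 0) :
    ∀ t, w t = a t * v t - z t := by
  set g : ℝ → ℝ := fun t => Real.exp t * (w t - a t * v t + z t) with hg
  have hgd : ∀ t : ℝ, HasDerivAt g 0 t := by
    intro t
    have h1 : HasDerivAt (fun t => w t - a t * v t + z t)
        (deriv w t - (deriv a t * v t + a t * deriv v t) + deriv z t) t :=
      (((hw t).hasDerivAt.sub ((ha t).hasDerivAt.mul (hv t).hasDerivAt)).add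
        (hz t).hasDerivAt)
    have h2 := (Real.hasDerivAt_exp t).mul h1
    convert h2 using 1
    case e'_4 => rfl
    case e'_5 => rfl
    case e'_8 => rfl
    rw [hweq, hveq, hzeq]; ring
  have hconst : ∀ t : ℝ, g t = g 0 := by
    intro t
    exact is_const_of_deriv_eq_zero (fun x => (hgd x).differentiableAt)
      (fun x => (hgd x).deriv) t 0
  intro t
  have h0 : g 0 = 0 := by simp [hg, hw0, hv0, hz0]
  have := hconst t
  rw [h0, hg] at this
  simp only at this
  have h2 := (mul_eq_zero.mp this).resolve_left (ne_of_gt (Real.exp_pos t))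
  linarith
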